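/- Let G = (V,E) be a median graph and R = (R_v)_{v∈V} a reduced intermediate profile (all orders distinct). Then two vertices u, v are adjacent in G if and only if the betweenness interval [R_u, R_v] = { R_w : w ∈ V, R_w is between R_u and R_v } equals exactly {R_u, R_v}. -/

import Mathlib

open SimpleGraph

/-- `Geo G u w v` : vertex `w` lies geodesically between `u` and `v`
(i.e. on some shortest path from `u` to `v`). -/
def Geo {V : Type*} (G : SimpleGraph V) (u w v : V) : Prop :=
  G.dist u w + G.dist w v = G.dist u v

/-- A set of vertices is geodesically convex if it contains every vertex
lying on a shortest path between two of its members. -/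
def GConvex {V : Type*} (G : SimpleGraph V) (C : Set V) : Prop :=
  ∀ u ∈ C, ∀ v ∈ C, ∀ w, Geo G u w v → w ∈ C

/-- A profile of strict preference relations is intermediate on `G` if every
set `V_{ab}` of voters preferring `a` to `b` is geodesically convex. -/
def Intermediate {V A : Type*} (G : SimpleGraph V) (R : V → A → A → Prop) : Prop :=
  ∀ a b : A, GConvex G {i | R i a b}

/-- A median graph: connected, and every triple of vertices has a unique median. -/
def MedianGraph {V : Type*} (G : SimpleGraph V) : Prop :=
  G.Connected ∧ ∀ u v w : V, ∃! m : V, Geo G u m v ∧ Geo G u m w ∧ Geo G v m w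

/-- For a reduced intermediate profile on a median graph, two distinct
vertices are adjacent iff the betweenness interval `[R_u, R_v]` of orders of
the profile contains only `R_u` and `R_v`. -/
theorem stmt14 {V A : Type*} (G : SimpleGraph V) (hG : MedianGraph G)
    (R : V → A → A → Prop) (hR : ∀ i, IsStrictTotalOrder A (R i))
    (hint : Intermediate G R) (hred : Function.Injective R)
    (u v : V) (huv : u ≠ v) :
    G.Adj u v ↔
      ∀ w : V, (∀ a b : A, R u a b → R v a b → R w a b) → w = u ∨ w = v := by
  obtain ⟨hconn, hmed⟩ := hG
  constructor
  · intro hadj w hw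
    obtain ⟨m, ⟨hmuv, hmuw, hmvw⟩, -⟩ := hmed u v w
    have core : ∀ a b, R w a b → R m a b := by
      intro a b hwab
      rcases (haveI := hR u; trichotomous_of (R u) a b) with hu | rfl | hu
      · exact hint a b u hu w hwab m hmuw
      · exact absurd hwab ((hR w).irrefl a)
      · rcases (haveI := hR v; trichotomous_of (R v) a b) with hv | rfl | hv
        · exact hint a b v hv w hwab m hmvw
        · exact absurd hwab ((hR w).irrefl a)
        · exact absurd ((hR w).trans a b a hwab (hw b a hu hv)) ((hR w).irrefl a)
    have hmw : m = w := by
      apply hred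
      funext a b
      apply propext
      constructor
      · intro hm
        rcases (haveI := hR w; trichotomous_of (R w) a b) with h | rfl | h
        · exact h
        · exact absurd hm ((hR m).irrefl a)
        · exact absurd ((hR m).trans a b a hm (core b a h)) ((hR m).irrefl a)
      · exact core a b
    subst hmw
    have h1 : G.dist u v = 1 := dist_eq_one_iff_adj.mpr hadj
    have := hmuv
    unfold Geo at this
    rw [h1] at this
    rcases Nat.add_eq_one_iff.mp this with ⟨ha, _⟩ | ⟨_, hb⟩
    · left
      exact (hconn.dist_eq_zero_iff.mp ha).symm
    · right
      exact hconn.dist_eq_zero_iff.mp hb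
  · intro h
    by_contra hadj
    have hd0 : G.dist u v ≠ 0 := fun h0 => huv (hconn.dist_eq_zero_iff.mp h0)
    have hd1 : G.dist u v ≠ 1 := fun h1 => hadj (dist_eq_one_iff_adj.mp h1)
    have hd2 : 2 ≤ G.dist u v := by omega
    obtain ⟨p, hp⟩ := G.exists_walk_of_dist_ne_zero hd0
    cases p with
    | nil => exact hd0 SimpleGraph.dist_self
    | cons he q =>
      rename_i w
      rw [SimpleGraph.Walk.length_cons] at hp
      have h1 : G.dist u w ≤ 1 := by
        have := G.dist_le (SimpleGraph.Walk.cons he SimpleGraph.Walk.nil)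
        simpa using this
      have h2 : G.dist w v ≤ q.length := G.dist_le q
      have h3 : G.dist u v ≤ G.dist u w + G.dist w v := hconn.dist_triangle
      have hgeo : Geo G u w v := by unfold Geo; omega
      have hduw : G.dist u w = 1 := by omega
      have hdwv : G.dist w v = G.dist u v - 1 := by omega
      have hbet : ∀ a b : A, R u a b → R v a b → R w a b := by
        intro a b hua hva
        exact hint a b u hua v hva w hgeo
      rcases h w hbet with rfl | rfl
      · rw [SimpleGraph.dist_self] at hduw; omega
      · rw [SimpleGraph.dist_self] at hdwv; omega
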